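/- Let λ ∈ ℝ^n be nonzero with λ_1 ≥ λ_2 ≥ … ≥ λ_n ≥ 0 and let b ∈ ℝ^n. For every y ∈ ℝ with Π_C(yλ + b) ≠ 0 and every H ∈ H(yλ + b), it holds that λᵀHλ > 0; that is, every element of M(y) is strictly positive. -/

import Mathlib

open Matrix

/-- The matrix `B` with `(Bx)_i = x_i − x_{i+1}` for `1 ≤ i ≤ n−1` and `(Bx)_n = x_n`. -/
def Bmat (n : ℕ) : Matrix (Fin n) (Fin n) ℝ :=
  Matrix.of fun i j => if j = i then 1 else if (j : ℕ) = (i : ℕ) + 1 then -1 else 0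

/-- `B_Γ`, the submatrix of `B` formed by the rows indexed by `Γ`. -/
def subRows {n : ℕ} (Γ : Finset (Fin n)) : Matrix {i // i ∈ Γ} (Fin n) ℝ :=
  Matrix.of fun i j => Bmat n i.1 j

/-- `H = I_n − B_Γᵀ (B_Γ B_Γᵀ)⁻¹ B_Γ`, the orthogonal projection onto the null space of
`B_Γ` (equal to `I_n` when `Γ = ∅`). -/
noncomputable def Hmat {n : ℕ} (Γ : Finset (Fin n)) : Matrix (Fin n) (Fin n) ℝ :=
  1 - (subRows Γ)ᵀ * (subRows Γ * (subRows Γ)ᵀ)⁻¹ * subRows Γ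

/-- The monotone nonnegative cone `C = {x : x₁ ≥ x₂ ≥ … ≥ xₙ ≥ 0}`. -/
def coneC (n : ℕ) : Set (Fin n → ℝ) :=
  {x | (∀ i j : Fin n, i ≤ j → x j ≤ x i) ∧ ∀ i, 0 ≤ x i}

/-- `Pc` is the Euclidean (metric) projection onto the cone `C`:
`Pc d` minimizes `½‖x − d‖²` over `x ∈ C`. -/
def IsProjC {n : ℕ} (Pc : (Fin n → ℝ) → Fin n → ℝ) : Prop :=
  ∀ d : Fin n → ℝ, Pc d ∈ coneC n ∧
    ∀ x ∈ coneC n, (1/2) * ∑ i, (Pc d i - d i)^2 ≤ (1/2) * ∑ i, (x i - d i)^2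

/-- `z(d) = (Bᵀ)⁻¹(d − Π_C(d))`. -/
noncomputable def zdual {n : ℕ} (Pc : (Fin n → ℝ) → Fin n → ℝ) (d : Fin n → ℝ) :
    Fin n → ℝ :=
  Matrix.mulVec ((Bmat n)ᵀ)⁻¹ (d - Pc d)

/-- `K(d) = {Γ : Supp(z(d)) ⊆ Γ ⊆ I(Π_C(d))}`. -/
def Kset {n : ℕ} (Pc : (Fin n → ℝ) → Fin n → ℝ) (d : Fin n → ℝ) :
    Set (Finset (Fin n)) :=
  {Γ | (∀ i, zdual Pc d i ≠ 0 → i ∈ Γ) ∧ ∀ i ∈ Γ, (Bmat n).mulVec (Pc d) i = 0}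

/-- `H(d) = {I_n − B_Γᵀ(B_Γ B_Γᵀ)⁻¹ B_Γ : Γ ∈ K(d)}`, the HS-Jacobian of `Π_C` at `d`. -/
def Hset {n : ℕ} (Pc : (Fin n → ℝ) → Fin n → ℝ) (d : Fin n → ℝ) :
    Set (Matrix (Fin n) (Fin n) ℝ) :=
  {H | ∃ Γ ∈ Kset Pc d, H = Hmat Γ}

/-- `M(y) = {λᵀHλ : H ∈ H(yλ + b)}`. -/
def Mset {n : ℕ} (Pc : (Fin n → ℝ) → Fin n → ℝ) (lam b : Fin n → ℝ) (y : ℝ) : Set ℝ :=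
  {m | ∃ H ∈ Hset Pc (y • lam + b), m = dotProduct lam (H.mulVec lam)}

/-- The dual objective `φ(y) = ½‖Π_C(yλ + b)‖² − yτ − ½‖b‖²`. -/
noncomputable def phiFun {n : ℕ} (Pc : (Fin n → ℝ) → Fin n → ℝ) (lam b : Fin n → ℝ)
    (τ : ℝ) : ℝ → ℝ :=
  fun y => (1/2) * ∑ i, (Pc (y • lam + b) i)^2 - y * τ - (1/2) * ∑ i, (b i)^2

/-- `ψ(y) = ⟨Π_C(yλ + b), λ⟩ − τ` (the derivative `φ′` of the dual objective). -/
noncomputable def psiFun {n : ℕ} (Pc : (Fin n → ℝ) → Fin n → ℝ) (lam b : Fin n → ℝ)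
    (τ : ℝ) : ℝ → ℝ :=
  fun y => (∑ i, Pc (y • lam + b) i * lam i) - τ

/-- The Euclidean norm on `ℝⁿ`. -/
noncomputable def enorm {n : ℕ} (x : Fin n → ℝ) : ℝ :=
  Real.sqrt (∑ i, (x i)^2)

lemma Bmat_det (n : ℕ) : (Bmat n).det = 1 := by
  have h : (Bmat n).BlockTriangular id := by
    intro i j hij
    simp only [Bmat, of_apply, id] at *
    rw [if_neg, if_neg]
    · omega
    · exact fun hc => absurd (Fin.val_eq_val j i |>.2 hc) (by omega)
  rw [Matrix.det_of_upperTriangular h]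
  simp [Bmat]

lemma Bmat_isUnit (n : ℕ) : IsUnit (Bmat n) := by
  rw [Matrix.isUnit_iff_isUnit_det, Bmat_det]
  exact isUnit_one

lemma subRows_T_inj {n : ℕ} (Γ : Finset (Fin n)) (x : {i // i ∈ Γ} → ℝ)
    (hx : (subRows Γ)ᵀ.mulVec x = 0) : x = 0 := by
  classical
  set xt : Fin n → ℝ := fun i => if h : i ∈ Γ then x ⟨i, h⟩ else 0 with hxt
  have hinj := Matrix.vecMul_injective_iff_isUnit.2 (Bmat_isUnit n)
  have hv : Matrix.vecMul xt (Bmat n) = 0 := by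
    funext j
    have := congrFun hx j
    simp only [Matrix.mulVec, Matrix.vecMul, dotProduct, Matrix.transpose_apply,
      subRows, of_apply, Pi.zero_apply] at this ⊢
    rw [← this]
    have h2 : ∀ i : {i // i ∈ Γ}, Bmat n i.1 j * x i = xt i.1 * Bmat n i.1 j := by
      intro i
      simp [hxt, i.2, mul_comm]
    rw [Finset.sum_congr rfl (fun i _ => h2 i), Finset.sum_coe_sort Γ
      (fun i => xt i * Bmat n i j)]
    rw [← Finset.sum_subset (Finset.subset_univ Γ)]
    intro i _ hi
    simp [hxt, hi]
  have : xt = 0 := by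
    apply hinj
    show xt ᵥ* Bmat n = (0 : Fin n → ℝ) ᵥ* Bmat n
    rw [hv, Matrix.zero_vecMul]
  funext i
  have := congrFun this i.1
  simpa [hxt, i.2] using this

lemma gram_isUnit {n : ℕ} (Γ : Finset (Fin n)) :
    IsUnit (subRows Γ * (subRows Γ)ᵀ) := by
  classical
  rw [← Matrix.mulVec_injective_iff_isUnit]
  intro u v huv
  have h0 : (subRows Γ * (subRows Γ)ᵀ).mulVec (u - v) = 0 := by
    rw [Matrix.mulVec_sub, huv, sub_self]
  have hAT : (subRows Γ)ᵀ.mulVec (u - v) = 0 := by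
    have hdot : dotProduct ((subRows Γ)ᵀ.mulVec (u - v)) ((subRows Γ)ᵀ.mulVec (u - v)) = 0 := by
      have : dotProduct (u - v) ((subRows Γ * (subRows Γ)ᵀ).mulVec (u - v)) = 0 := by
        rw [h0, dotProduct_zero]
      rw [← Matrix.mulVec_mulVec, Matrix.dotProduct_mulVec, ← Matrix.mulVec_transpose] at this
      exact this
    have := dotProduct_self_eq_zero.mp hdot
    exact this
  have := subRows_T_inj Γ (u - v) hAT
  exact sub_eq_zero.1 this

/-- for every `y` with `Π_C(yλ + b) ≠ 0` and every `H ∈ H(yλ + b)`,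
`λᵀHλ > 0`; that is, every element of `M(y)` is strictly positive. -/
theorem stmt14 {n : ℕ} (hn : 0 < n) (lam : Fin n → ℝ)
    (hmono : ∀ i j : Fin n, i ≤ j → lam j ≤ lam i)
    (hnonneg : ∀ i, 0 ≤ lam i) (hlam : lam ≠ 0)
    (b : Fin n → ℝ)
    (Pc : (Fin n → ℝ) → Fin n → ℝ) (hPc : IsProjC Pc)
    (y : ℝ) (hy : Pc (y • lam + b) ≠ 0) :
    ∀ H ∈ Hset Pc (y • lam + b), 0 < dotProduct lam (H.mulVec lam) := by
  classical
  intro H hH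
  obtain ⟨Γ, hΓ, rfl⟩ := hH
  set d : Fin n → ℝ := y • lam + b with hd
  set Pi0 : Fin n → ℝ := Pc d with hPi0
  set A : Matrix {i // i ∈ Γ} (Fin n) ℝ := subRows Γ with hA
  set N : Matrix {i // i ∈ Γ} {i // i ∈ Γ} ℝ := (A * Aᵀ)⁻¹ with hN
  have hMdet : IsUnit (A * Aᵀ).det := (Matrix.isUnit_iff_isUnit_det _).1 (gram_isUnit Γ)
  have hNM : N * (A * Aᵀ) = 1 := Matrix.nonsing_inv_mul _ hMdet
  set P : Matrix (Fin n) (Fin n) ℝ := Aᵀ * N * A with hP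
  have hP2 : P * P = P := by
    have h1 : P * P = Aᵀ * ((N * (A * Aᵀ)) * (N * A)) := by
      simp only [hP, Matrix.mul_assoc]
    rw [h1, hNM, Matrix.one_mul, hP, Matrix.mul_assoc]
  have hHdef : Hmat Γ = 1 - P := rfl
  have hHH : Hmat Γ * Hmat Γ = Hmat Γ := by
    rw [hHdef]
    simp [Matrix.sub_mul, Matrix.mul_sub, hP2]
  have hNT : Nᵀ = N := by
    rw [hN, Matrix.transpose_nonsing_inv]
    congr 1
    rw [Matrix.transpose_mul, Matrix.transpose_transpose]
  have hHT : (Hmat Γ)ᵀ = Hmat Γ := by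
    rw [hHdef]
    simp [Matrix.transpose_sub, Matrix.transpose_mul, Matrix.transpose_transpose, hNT,
      Matrix.mul_assoc, hP]
  set u : Fin n → ℝ := (Hmat Γ).mulVec lam with hu
  have key : dotProduct lam ((Hmat Γ).mulVec lam) = dotProduct u u := by
    conv_lhs => rw [← hHH]
    rw [← Matrix.mulVec_mulVec, Matrix.dotProduct_mulVec, ← Matrix.mulVec_transpose, hHT]
  -- lam ⬝ Pi0 > 0
  have hcone : Pi0 ∈ coneC n := (hPc d).1
  have hdotpos : 0 < dotProduct lam Pi0 := by
    obtain ⟨i0, hi0'⟩ := Function.ne_iff.1 hlam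
    obtain ⟨j0, hj0'⟩ := Function.ne_iff.1 hy
    have hi0 : lam i0 ≠ 0 := by simpa using hi0'
    have hj0 : Pi0 j0 ≠ 0 := by simpa using hj0'
    have hz : ∀ i : Fin n, (⟨0, hn⟩ : Fin n) ≤ i := fun i => by simp [Fin.le_def]
    have hlz : 0 < lam ⟨0, hn⟩ :=
      lt_of_lt_of_le ((hnonneg i0).lt_of_ne (Ne.symm hi0)) (hmono _ i0 (hz i0))
    have hpz : 0 < Pi0 ⟨0, hn⟩ :=
      lt_of_lt_of_le ((hcone.2 j0).lt_of_ne (Ne.symm hj0)) (hcone.1 _ j0 (hz j0))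
    have : 0 < ∑ i, lam i * Pi0 i :=
      Finset.sum_pos' (fun i _ => mul_nonneg (hnonneg i) (hcone.2 i))
        ⟨⟨0, hn⟩, Finset.mem_univ _, mul_pos hlz hpz⟩
    simpa [dotProduct] using this
  have hune : u ≠ 0 := by
    intro h0
    have h1 : (Hmat Γ).mulVec lam = lam - P.mulVec lam := by
      rw [hHdef, Matrix.sub_mulVec, Matrix.one_mulVec]
    have hlamP : lam = P.mulVec lam := by
      have h2 : lam - P.mulVec lam = 0 := by rw [← h1, ← hu, h0]
      exact (sub_eq_zero.1 h2)
    set w : {i // i ∈ Γ} → ℝ := (N * A).mulVec lam with hw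
    have hlamA : lam = Aᵀ.mulVec w := by
      rw [hw, Matrix.mulVec_mulVec, ← Matrix.mul_assoc, ← hP]
      exact hlamP
    have hAPi0 : A.mulVec Pi0 = 0 := by
      funext i
      simpa [hA, subRows, Matrix.mulVec, dotProduct] using hΓ.2 i.1 i.2
    have hzero : dotProduct lam Pi0 = 0 := by
      rw [hlamA, Matrix.mulVec_transpose, ← Matrix.dotProduct_mulVec, hAPi0,
        dotProduct_zero]
    exact hdotpos.ne' hzero
  rw [key]
  obtain ⟨k, hk⟩ := Function.ne_iff.1 hune
  have hk' : u k ≠ 0 := by simpa using hk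
  have : 0 < ∑ i, u i * u i :=
    Finset.sum_pos' (fun i _ => mul_self_nonneg _)
      ⟨k, Finset.mem_univ _, mul_self_pos.2 hk'⟩
  simpa [dotProduct] using this
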